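/- Let L > 0 and let f : E → ℝ be convex with nonempty minimizer set X* and minimum value f*, and suppose f is L-QG+. Let (x_k)_{k≥0} in E and (g_k)_{k≥0} in E satisfy g_k ∈ ∂f(x_k) and x_{k+1} = x_k − (1/L)·g_k for all k ≥ 0. Then for every n ∈ ℕ, the Polyak–Ruppert average x̄_n = (1/(n+1))·∑_{k=0}^{n} x_k satisfies f(x̄_n) − f* ≤ (L/(2(n+1)))·d(x_0, X*)². -/

import Mathlib

open scoped RealInnerProductSpace

private lemma aux_le_of_forall_eps {a d C : ℝ}
    (h : ∀ ε : ℝ, 0 < ε → a ≤ C * (d + ε) ^ 2) : a ≤ C * d ^ 2 := by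
  have ht : Filter.Tendsto (fun ε : ℝ => C * (d + ε) ^ 2) (nhdsWithin 0 (Set.Ioi 0))
      (nhds (C * d ^ 2)) := by
    have h0 : Filter.Tendsto (fun ε : ℝ => C * (d + ε) ^ 2) (nhds 0)
        (nhds (C * (d + 0) ^ 2)) := by
      exact (Continuous.tendsto (by continuity) 0)
    simpa using h0.mono_left nhdsWithin_le_nhds
  refine ge_of_tendsto ht ?_
  filter_upwards [self_mem_nhdsWithin] with ε hε
  exact h ε hε

theorem subgradient_method_polyak_ruppert_average
    {E : Type*} [NormedAddCommGroup E] [InnerProductSpace ℝ E] [FiniteDimensional ℝ E]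
    (L : ℝ) (hL : 0 < L) (f : E → ℝ) (hconv : ConvexOn ℝ Set.univ f)
    (Xstar : Set E) (hXstar : Xstar = {z | ∀ y, f z ≤ f y}) (hne : Xstar.Nonempty)
    (fstar : ℝ) (hfstar : ∀ z ∈ Xstar, f z = fstar)
    (hQG : ∀ z, f z - fstar ≤ L / 2 * Metric.infDist z Xstar ^ 2)
    (x g : ℕ → E)
    (hsub : ∀ k, ∀ y, f y ≥ f (x k) + ⟪g k, y - x k⟫)
    (hupd : ∀ k, x (k + 1) = x k - (1 / L) • g k) :
    ∀ n : ℕ,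
      f ((1 / ((n : ℝ) + 1)) • ∑ k ∈ Finset.range (n + 1), x k) - fstar
        ≤ L / (2 * ((n : ℝ) + 1)) * Metric.infDist (x 0) Xstar ^ 2 := by
  set d : ℕ → ℝ := fun k => Metric.infDist (x k) Xstar with hdd
  have hd0 : ∀ k, 0 ≤ d k := fun k => Metric.infDist_nonneg
  -- key per-step inequality
  have key : ∀ k, f (x k) - fstar ≤ L / 2 * (d k ^ 2 - d (k + 1) ^ 2) := by
    intro k
    have h2 : f (x k) - fstar + L / 2 * d (k + 1) ^ 2 ≤ L / 2 * d k ^ 2 := by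
      apply aux_le_of_forall_eps
      intro ε hε
      obtain ⟨z, hzX, hzd⟩ := (Metric.infDist_lt_iff hne).mp
        (show Metric.infDist (x k) Xstar < d k + ε by
          simpa [hdd] using lt_add_of_pos_right (d k) hε)
      have hzf : f z = fstar := hfstar z hzX
      set G : ℝ := ‖g k‖ ^ 2 with hG
      set P : ℝ := ⟪g k, x k - z⟫ with hP
      -- Inequality A : f (x k) - fstar + 1/(2L) G ≤ P
      have hA : f (x k) - fstar + 1 / (2 * L) * G ≤ P := by
        have hs := hsub k (z + (1 / L) • g k)
        have hinner : ⟪g k, z + (1 / L) • g k - x k⟫ = -P + (1 / L) * G := by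
          have : z + (1 / L) • g k - x k = ((1 / L) • g k) - (x k - z) := by abel
          rw [hP, hG, this, inner_sub_right, real_inner_smul_right,
            real_inner_self_eq_norm_sq]
          ring
        have hq := hQG (z + (1 / L) • g k)
        have hdist : Metric.infDist (z + (1 / L) • g k) Xstar ≤ (1 / L) * ‖g k‖ := by
          have h1 : Metric.infDist (z + (1 / L) • g k) Xstar ≤ dist (z + (1 / L) • g k) z :=
            Metric.infDist_le_dist_of_mem hzX
          have h2 : dist (z + (1 / L) • g k) z = (1 / L) * ‖g k‖ := by
            rw [dist_eq_norm]
            have he : z + (1 / L) • g k - z = (1 / L) • g k := by abel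
            rw [he, norm_smul, Real.norm_eq_abs, abs_of_pos (by positivity : (0:ℝ) < 1 / L)]
          linarith
        have hdist2 : Metric.infDist (z + (1 / L) • g k) Xstar ^ 2 ≤ (1 / L) ^ 2 * G := by
          have := pow_le_pow_left₀ Metric.infDist_nonneg hdist 2
          calc Metric.infDist (z + (1 / L) • g k) Xstar ^ 2 ≤ ((1 / L) * ‖g k‖) ^ 2 := this
            _ = (1 / L) ^ 2 * G := by rw [hG]; ring
        have hq2 : f (z + (1 / L) • g k) - fstar ≤ L / 2 * ((1 / L) ^ 2 * G) :=
          le_trans hq (by nlinarith [hdist2])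
        have hLne : L ≠ 0 := ne_of_gt hL
        have : f (x k) + (-P + (1 / L) * G) - fstar ≤ L / 2 * ((1 / L) ^ 2 * G) := by
          rw [← hinner]; linarith [hs]
        have hexp : L / 2 * ((1 / L) ^ 2 * G) = 1 / (2 * L) * G := by
          field_simp
        rw [hexp] at this
        have h1L : (1 : ℝ) / L * G - 1 / (2 * L) * G = 1 / (2 * L) * G := by
          field_simp; ring
        nlinarith [this]
      -- Inequality B : d (k+1)^2 ≤ ‖x k - z‖^2 - 2/L * P + (1/L)^2 * G
      have hB : d (k + 1) ^ 2 ≤ ‖x k - z‖ ^ 2 - 2 / L * P + (1 / L) ^ 2 * G := by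
        have h1 : d (k + 1) ≤ ‖x (k + 1) - z‖ := by
          simpa [hdd, dist_eq_norm] using Metric.infDist_le_dist_of_mem (x := x (k+1)) hzX
        have h1' : d (k + 1) ^ 2 ≤ ‖x (k + 1) - z‖ ^ 2 := pow_le_pow_left₀ (hd0 _) h1 2
        have h2 : ‖x (k + 1) - z‖ ^ 2 = ‖x k - z‖ ^ 2 - 2 / L * P + (1 / L) ^ 2 * G := by
          have hx : x (k + 1) - z = (x k - z) - (1 / L) • g k := by rw [hupd k]; abel
          rw [hx, norm_sub_sq_real, real_inner_smul_right, norm_smul,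
            real_inner_comm, ← hP, mul_pow, hG]
          have : ‖(1 : ℝ) / L‖ = 1 / L := abs_of_pos (by positivity)
          rw [this]; ring
        linarith
      -- combine
      have hnz : ‖x k - z‖ ^ 2 ≤ (d k + ε) ^ 2 := by
        have h1 : ‖x k - z‖ ≤ d k + ε := by
          rw [← dist_eq_norm]; exact le_of_lt hzd
        exact pow_le_pow_left₀ (norm_nonneg _) h1 2
      have hLpos : (0:ℝ) < 1 / (2 * L) := by positivity
      -- f(xk) - fstar ≤ P - 1/(2L) G ; L/2 * d(k+1)^2 ≤ L/2 ‖xk−z‖² − P + 1/(2L) G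
      have hB2 : L / 2 * d (k + 1) ^ 2 ≤ L / 2 * ‖x k - z‖ ^ 2 - P + 1 / (2 * L) * G := by
        have := mul_le_mul_of_nonneg_left hB (le_of_lt (by positivity : (0:ℝ) < L / 2))
        have hexp : L / 2 * (‖x k - z‖ ^ 2 - 2 / L * P + (1 / L) ^ 2 * G)
            = L / 2 * ‖x k - z‖ ^ 2 - P + 1 / (2 * L) * G := by
          field_simp
        linarith [hexp ▸ this]
      have hfinal : f (x k) - fstar + L / 2 * d (k + 1) ^ 2 ≤ L / 2 * ‖x k - z‖ ^ 2 := by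
        linarith
      calc f (x k) - fstar + L / 2 * d (k + 1) ^ 2 ≤ L / 2 * ‖x k - z‖ ^ 2 := hfinal
        _ ≤ L / 2 * (d k + ε) ^ 2 := by nlinarith
    linarith
  -- sum / telescoping
  intro n
  have hsum : ∑ k ∈ Finset.range (n + 1), (f (x k) - fstar) ≤ L / 2 * d 0 ^ 2 := by
    have h1 : ∑ k ∈ Finset.range (n + 1), (f (x k) - fstar)
        ≤ ∑ k ∈ Finset.range (n + 1), L / 2 * (d k ^ 2 - d (k + 1) ^ 2) :=
      Finset.sum_le_sum fun k _ => key k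
    have h2 : ∑ k ∈ Finset.range (n + 1), L / 2 * (d k ^ 2 - d (k + 1) ^ 2)
        = L / 2 * (d 0 ^ 2 - d (n + 1) ^ 2) := by
      rw [← Finset.mul_sum, Finset.sum_range_sub' (fun k => d k ^ 2)]
    have h3 : L / 2 * (d 0 ^ 2 - d (n + 1) ^ 2) ≤ L / 2 * d 0 ^ 2 := by
      nlinarith [pow_le_pow_left₀ (hd0 (n+1)) (le_refl (d (n+1))) 2, sq_nonneg (d (n+1))]
    linarith [h2 ▸ h1]
  -- Jensen
  have hnpos : (0:ℝ) < (n : ℝ) + 1 := by positivity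
  have hjensen : f ((1 / ((n : ℝ) + 1)) • ∑ k ∈ Finset.range (n + 1), x k)
      ≤ ∑ k ∈ Finset.range (n + 1), (1 / ((n : ℝ) + 1)) * f (x k) := by
    have := hconv.map_sum_le (t := Finset.range (n + 1))
      (w := fun _ => 1 / ((n : ℝ) + 1)) (p := x)
      (fun i _ => by positivity)
      (by simp [Finset.sum_const, Finset.card_range]; field_simp)
      (fun i _ => Set.mem_univ _)
    simpa [Finset.smul_sum] using this
  have hsum2 : ∑ k ∈ Finset.range (n + 1), (1 / ((n : ℝ) + 1)) * f (x k)
      = (1 / ((n : ℝ) + 1)) * ∑ k ∈ Finset.range (n + 1), f (x k) := by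
    rw [Finset.mul_sum]
  have hsum3 : ∑ k ∈ Finset.range (n + 1), f (x k)
      ≤ ((n : ℝ) + 1) * fstar + L / 2 * d 0 ^ 2 := by
    have : ∑ k ∈ Finset.range (n + 1), (f (x k) - fstar)
        = ∑ k ∈ Finset.range (n + 1), f (x k) - ((n : ℝ) + 1) * fstar := by
      rw [Finset.sum_sub_distrib]
      simp [Finset.sum_const, Finset.card_range]
    linarith [this ▸ hsum]
  have : f ((1 / ((n : ℝ) + 1)) • ∑ k ∈ Finset.range (n + 1), x k)
      ≤ (1 / ((n : ℝ) + 1)) * (((n : ℝ) + 1) * fstar + L / 2 * d 0 ^ 2) := by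
    rw [hsum2] at hjensen
    calc f ((1 / ((n : ℝ) + 1)) • ∑ k ∈ Finset.range (n + 1), x k)
        ≤ (1 / ((n : ℝ) + 1)) * ∑ k ∈ Finset.range (n + 1), f (x k) := hjensen
      _ ≤ (1 / ((n : ℝ) + 1)) * (((n : ℝ) + 1) * fstar + L / 2 * d 0 ^ 2) := by
          apply mul_le_mul_of_nonneg_left hsum3 (by positivity)
  have hexp : (1 / ((n : ℝ) + 1)) * (((n : ℝ) + 1) * fstar + L / 2 * d 0 ^ 2)
      = fstar + L / (2 * ((n : ℝ) + 1)) * d 0 ^ 2 := by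
    field_simp
  rw [hexp] at this
  have hfin := sub_le_sub_right this fstar
  rw [add_sub_cancel_left] at hfin
  exact hfin
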